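/- For every n ≥ 2, the number of permutations π ∈ S_n that avoid both generalized patterns 1-23 and 1-32 and satisfy π_n ≠ 1 equals (n-1)·I_{n-2}, where I_m is the number of involutions in S_m. -/

import Mathlib

/-- `π` avoids the generalized pattern 1-23. -/
def Avoids1d23 {n : ℕ} (π : Equiv.Perm (Fin n)) : Prop :=
  ¬ ∃ (i j : Fin n) (h : j.1 + 1 < n), i < j ∧ π i < π j ∧ π j < π ⟨j.1 + 1, h⟩

/-- `π` avoids the generalized pattern 1-32. -/
def Avoids1d32 {n : ℕ} (π : Equiv.Perm (Fin n)) : Prop :=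
  ¬ ∃ (i j : Fin n) (h : j.1 + 1 < n), i < j ∧ π i < π ⟨j.1 + 1, h⟩ ∧ π ⟨j.1 + 1, h⟩ < π j

/-- The number of involutions in the symmetric group `S m`. -/
noncomputable def invCount (m : ℕ) : ℕ := Nat.card {σ : Equiv.Perm (Fin m) // σ * σ = 1}
open Equiv

/-- extend a permutation of Fin j to Fin (j+1) fixing 0 -/
def extZ {j : ℕ} (σ : Perm (Fin j)) : Perm (Fin (j + 1)) where
  toFun x := Fin.cases 0 (fun i => (σ i).succ) x
  invFun x := Fin.cases 0 (fun i => (σ⁻¹ i).succ) x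
  left_inv x := by
    cases x using Fin.cases with
    | zero => simp
    | succ i => simp
  right_inv x := by
    cases x using Fin.cases with
    | zero => simp
    | succ i => simp

@[simp] lemma extZ_zero {j : ℕ} (σ : Perm (Fin j)) : extZ σ 0 = 0 := rfl
@[simp] lemma extZ_succ {j : ℕ} (σ : Perm (Fin j)) (i : Fin j) :
    extZ σ i.succ = (σ i).succ := rfl

lemma extZ_mul {j : ℕ} (σ τ : Perm (Fin j)) : extZ (σ * τ) = extZ σ * extZ τ := by
  ext x
  cases x using Fin.cases with
  | zero => simp
  | succ i => simp

@[simp] lemma extZ_one {j : ℕ} : extZ (1 : Perm (Fin j)) = 1 := by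
  ext x
  cases x using Fin.cases with
  | zero => simp
  | succ i => simp

lemma extZ_inj {j : ℕ} : Function.Injective (extZ (j := j)) := by
  intro σ τ h
  ext i
  have h2 : extZ σ i.succ = extZ τ i.succ := by rw [h]
  simp only [extZ_succ] at h2
  exact congrArg Fin.val (Fin.succ_injective _ h2)

/-- delete the fixed point 0 -/
def delZ {j : ℕ} (σ : Perm (Fin (j + 1))) (h : σ 0 = 0) : Perm (Fin j) where
  toFun i := (σ i.succ).pred (by
    intro hc
    exact (Fin.succ_ne_zero i) (σ.injective (hc.trans h.symm)))
  invFun i := (σ⁻¹ i.succ).pred (by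
    intro hc
    have : σ 0 = i.succ := by
      rw [← hc]; simp
    rw [h] at this
    exact (Fin.succ_ne_zero i) this.symm)
  left_inv i := by simp
  right_inv i := by simp

lemma extZ_delZ {j : ℕ} (σ : Perm (Fin (j + 1))) (h : σ 0 = 0) : extZ (delZ σ h) = σ := by
  ext x
  cases x using Fin.cases with
  | zero => simp [h]
  | succ i => simp [delZ, extZ]

lemma delZ_extZ {j : ℕ} (σ : Perm (Fin j)) (h : extZ σ 0 = 0) : delZ (extZ σ) h = σ := by
  apply extZ_inj
  rw [extZ_delZ]

/-- P1 -/
def equivP1 (j : ℕ) :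
    {σ : Perm (Fin (j + 1)) // σ * σ = 1 ∧ σ 0 = 0} ≃ {σ : Perm (Fin j) // σ * σ = 1} where
  toFun σ := ⟨delZ σ.1 σ.2.2, by
    apply extZ_inj
    rw [extZ_mul, extZ_delZ, σ.2.1, extZ_one]⟩
  invFun σ := ⟨extZ σ.1, by rw [← extZ_mul, σ.2, extZ_one], extZ_zero σ.1⟩
  left_inv σ := Subtype.ext (extZ_delZ σ.1 σ.2.2)
  right_inv σ := Subtype.ext (delZ_extZ σ.1 (extZ_zero σ.1))

/-- P1' : also tracking an extra fixed point -/
def equivP1' (j : ℕ) (k : Fin j) :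
    {σ : Perm (Fin (j + 1)) // (σ * σ = 1 ∧ σ 0 = 0) ∧ σ k.succ = k.succ} ≃
      {σ : Perm (Fin j) // σ * σ = 1 ∧ σ k = k} where
  toFun σ := ⟨delZ σ.1 σ.2.1.2, by
    constructor
    · apply extZ_inj; rw [extZ_mul, extZ_delZ, σ.2.1.1, extZ_one]
    · apply Fin.succ_injective
      have h1 : (delZ σ.1 σ.2.1.2 k).succ = σ.1 k.succ := Fin.succ_pred _ (by rw [σ.2.2]; exact Fin.succ_ne_zero k)
      rw [h1, σ.2.2]⟩
  invFun σ := ⟨extZ σ.1, ⟨by rw [← extZ_mul, σ.2.1, extZ_one], extZ_zero σ.1⟩,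
    by rw [extZ_succ, σ.2.2]⟩
  left_inv σ := Subtype.ext (extZ_delZ σ.1 σ.2.1.2)
  right_inv σ := Subtype.ext (delZ_extZ σ.1 (extZ_zero σ.1))
section scratch
variable {α : Type*} [DecidableEq α]

lemma swap_conj_fix (a b : α) (τ : Perm α) (ha : τ a = a) (hb : τ b = b) :
    swap a b * τ * swap a b = τ := by
  ext x
  simp only [Perm.mul_apply]
  rcases eq_or_ne x a with rfl | hxa
  · rw [swap_apply_left, hb, swap_apply_right, ha]
  rcases eq_or_ne x b with rfl | hxb
  · rw [swap_apply_right, ha, swap_apply_left, hb]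
  · rw [swap_apply_of_ne_of_ne hxa hxb, swap_apply_of_ne_of_ne]
    · intro hc; exact hxa (τ.injective (hc.trans ha.symm))
    · intro hc; exact hxb (τ.injective (hc.trans hb.symm))

lemma swap_conj_inv (a b : α) (σ : Perm α) (h2 : σ * σ = 1) (hab : σ a = b) :
    swap a b * σ * swap a b = σ := by
  have hba : σ b = a := by
    rw [← hab]
    have := congrArg (fun f : Perm α => f a) h2
    simpa using this
  ext x
  simp only [Perm.mul_apply]
  rcases eq_or_ne x a with rfl | hxa
  · rw [swap_apply_left, hba, swap_apply_left, hab]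
  rcases eq_or_ne x b with rfl | hxb
  · rw [swap_apply_right, hab, swap_apply_right, hba]
  · rw [swap_apply_of_ne_of_ne hxa hxb, swap_apply_of_ne_of_ne]
    · intro hc; exact hxb (σ.injective (hc.trans hba.symm))
    · intro hc; exact hxa (σ.injective (hc.trans hab.symm))

end scratch

def equivSwapA (j : ℕ) (k : Fin (j + 1)) :
    {σ : Perm (Fin (j + 2)) // σ * σ = 1 ∧ σ 0 = k.succ} ≃
      {σ : Perm (Fin (j + 2)) // (σ * σ = 1 ∧ σ 0 = 0) ∧ σ k.succ = k.succ} where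
  toFun σ := by
    refine ⟨swap 0 k.succ * σ.1, ⟨?_, ?_⟩, ?_⟩
    · have hc : swap (0 : Fin (j+2)) k.succ * σ.1 * swap 0 k.succ = σ.1 :=
        swap_conj_inv _ _ _ σ.2.1 σ.2.2
      calc swap 0 k.succ * σ.1 * (swap 0 k.succ * σ.1)
          = (swap 0 k.succ * σ.1 * swap 0 k.succ) * σ.1 := by group
        _ = σ.1 * σ.1 := by rw [hc]
        _ = 1 := σ.2.1
    · simp [Perm.mul_apply, σ.2.2]
    · have hba : σ.1 k.succ = 0 := by
        have h0 := congrArg (fun f : Perm (Fin (j+2)) => f 0) σ.2.1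
        simp only [Perm.mul_apply, Perm.one_apply] at h0
        rw [σ.2.2] at h0
        exact h0
      simp [Perm.mul_apply, hba]
  invFun τ := by
    refine ⟨swap 0 k.succ * τ.1, ?_, ?_⟩
    · have hc : swap (0 : Fin (j+2)) k.succ * τ.1 * swap 0 k.succ = τ.1 :=
        swap_conj_fix _ _ _ τ.2.1.2 τ.2.2
      calc swap 0 k.succ * τ.1 * (swap 0 k.succ * τ.1)
          = (swap 0 k.succ * τ.1 * swap 0 k.succ) * τ.1 := by group
        _ = τ.1 * τ.1 := by rw [hc]
        _ = 1 := τ.2.1.1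
    · simp [Perm.mul_apply, τ.2.1.2]
  left_inv σ := by
    apply Subtype.ext
    simp [← mul_assoc]
  right_inv τ := by
    apply Subtype.ext
    simp [← mul_assoc]

def equivConj (j : ℕ) (k : Fin (j + 1)) :
    {σ : Perm (Fin (j + 1)) // σ * σ = 1 ∧ σ k = k} ≃
      {σ : Perm (Fin (j + 1)) // σ * σ = 1 ∧ σ 0 = 0} where
  toFun σ := by
    refine ⟨swap 0 k * σ.1 * swap 0 k, ?_, ?_⟩
    · calc swap 0 k * σ.1 * swap 0 k * (swap 0 k * σ.1 * swap 0 k)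
          = swap 0 k * (σ.1 * (swap 0 k * swap 0 k) * σ.1) * swap 0 k := by group
        _ = 1 := by rw [swap_mul_self]; simp [σ.2.1]
    · simp [Perm.mul_apply, σ.2.2]
  invFun τ := by
    refine ⟨swap 0 k * τ.1 * swap 0 k, ?_, ?_⟩
    · calc swap 0 k * τ.1 * swap 0 k * (swap 0 k * τ.1 * swap 0 k)
          = swap 0 k * (τ.1 * (swap 0 k * swap 0 k) * τ.1) * swap 0 k := by group
        _ = 1 := by rw [swap_mul_self]; simp [τ.2.1]
    · simp [Perm.mul_apply, τ.2.2]
  left_inv σ := by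
    apply Subtype.ext
    simp [← mul_assoc, swap_mul_self]
  right_inv τ := by
    apply Subtype.ext
    simp [← mul_assoc, swap_mul_self]

def fiberEquiv (j : ℕ) (k : Fin (j + 1)) :
    {σ : Perm (Fin (j + 2)) // σ * σ = 1 ∧ σ 0 = k.succ} ≃
      {σ : Perm (Fin j) // σ * σ = 1} :=
  ((equivSwapA j k).trans (equivP1' (j + 1) k)).trans ((equivConj j k).trans (equivP1 j))

def fiberFiber (j : ℕ) (k : Fin (j + 1)) :
    {x : {σ : Perm (Fin (j + 2)) // σ * σ = 1 ∧ σ 0 ≠ 0} // (x.1 0).pred x.2.2 = k} ≃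
      {σ : Perm (Fin (j + 2)) // σ * σ = 1 ∧ σ 0 = k.succ} where
  toFun x := ⟨x.1.1, x.1.2.1, by
    have h := congrArg Fin.succ x.2
    rwa [Fin.succ_pred] at h⟩
  invFun σ := ⟨⟨σ.1, σ.2.1, by rw [σ.2.2]; exact Fin.succ_ne_zero _⟩, by
    apply Fin.succ_injective
    rw [Fin.succ_pred, σ.2.2]⟩
  left_inv x := Subtype.ext (Subtype.ext rfl)
  right_inv σ := Subtype.ext rfl

def sigmaEquiv (j : ℕ) :
    {σ : Perm (Fin (j + 2)) // σ * σ = 1 ∧ σ 0 ≠ 0} ≃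
      Σ _k : Fin (j + 1), {σ : Perm (Fin j) // σ * σ = 1} :=
  (Equiv.sigmaFiberEquiv fun x : {σ : Perm (Fin (j + 2)) // σ * σ = 1 ∧ σ 0 ≠ 0} =>
      (x.1 0).pred x.2.2).symm.trans
    (Equiv.sigmaCongrRight fun k => (fiberFiber j k).trans (fiberEquiv j k))

lemma invCount_rec (j : ℕ) : invCount (j + 2) = invCount (j + 1) + (j + 1) * invCount j := by
  have e0 : {σ : Perm (Fin (j+2)) // σ * σ = 1} ≃
      {σ : Perm (Fin (j+2)) // σ * σ = 1 ∧ σ 0 = 0} ⊕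
      {σ : Perm (Fin (j+2)) // σ * σ = 1 ∧ σ 0 ≠ 0} := by
    refine Equiv.trans ?_
      (Equiv.sumCongr (Equiv.subtypeSubtypeEquivSubtypeInter _ _)
        (Equiv.subtypeSubtypeEquivSubtypeInter (fun σ : Perm (Fin (j+2)) => σ * σ = 1) (fun σ => σ 0 ≠ 0)))
    exact (Equiv.sumCompl fun x : {σ : Perm (Fin (j+2)) // σ * σ = 1} => x.1 0 = 0).symm
  rw [invCount, Nat.card_congr e0, Nat.card_sum]
  congr 1
  · rw [Nat.card_congr (equivP1 (j+1)), invCount]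
  · rw [Nat.card_congr (sigmaEquiv j), Nat.card_congr (Equiv.sigmaEquivProd _ _),
      Nat.card_prod, Nat.card_eq_fintype_card, Fintype.card_fin, invCount]

section AvoidSide
open Equiv

def extL {m : ℕ} (π : Perm (Fin m)) : Perm (Fin (m + 1)) where
  toFun x := Fin.lastCases 0 (fun i => (π i).succ) x
  invFun y := Fin.cases (Fin.last m) (fun i => (π⁻¹ i).castSucc) y
  left_inv x := by
    cases x using Fin.lastCases with
    | last => simp
    | cast i => simp
  right_inv y := by
    cases y using Fin.cases with
    | zero => simp
    | succ i => simp

@[simp] lemma extL_last {m : ℕ} (π : Perm (Fin m)) : extL π (Fin.last m) = 0 := by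
  simp [extL]

@[simp] lemma extL_castSucc {m : ℕ} (π : Perm (Fin m)) (i : Fin m) :
    extL π i.castSucc = (π i).succ := by
  simp [extL]

lemma extL_mk_lt {m : ℕ} (π : Perm (Fin m)) (x : ℕ) (h1 : x < m) (h2 : x < m + 1) :
    extL π ⟨x, h2⟩ = (π ⟨x, h1⟩).succ := by
  have e : (⟨x, h2⟩ : Fin (m + 1)) = (⟨x, h1⟩ : Fin m).castSucc := rfl
  rw [e, extL_castSucc]

lemma extL_inj {m : ℕ} : Function.Injective (extL (m := m)) := by
  intro σ τ h
  ext i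
  have h2 : extL σ i.castSucc = extL τ i.castSucc := by rw [h]
  simp only [extL_castSucc] at h2
  exact congrArg Fin.val (Fin.succ_injective _ h2)

def delL {m : ℕ} (π : Perm (Fin (m + 1))) (h : π (Fin.last m) = 0) : Perm (Fin m) where
  toFun i := (π i.castSucc).pred (by
    intro hc
    exact (Fin.castSucc_lt_last i).ne (π.injective (hc.trans h.symm)))
  invFun i := (π⁻¹ i.succ).castPred (by
    intro hc
    have h2 : π (Fin.last m) = i.succ := by rw [← hc]; simp
    rw [h] at h2
    exact Fin.succ_ne_zero i h2.symm)
  left_inv i := by simp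
  right_inv i := by simp

lemma extL_delL {m : ℕ} (π : Perm (Fin (m + 1))) (h : π (Fin.last m) = 0) :
    extL (delL π h) = π := by
  ext x
  cases x using Fin.lastCases with
  | last => rw [extL_last, h]
  | cast i =>
    rw [extL_castSucc]
    exact congrArg Fin.val (Fin.succ_pred (π i.castSucc) (by
      intro hc
      exact (Fin.castSucc_lt_last i).ne (π.injective (hc.trans h.symm))))

lemma delL_extL {m : ℕ} (π : Perm (Fin m)) (h : extL π (Fin.last m) = 0) :
    delL (extL π) h = π :=
  extL_inj (extL_delL _ _)

lemma av23_extL {m : ℕ} (π : Perm (Fin m)) : Avoids1d23 (extL π) ↔ Avoids1d23 π := by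
  unfold Avoids1d23
  constructor
  · intro hav hex
    apply hav
    obtain ⟨i, j, h, hij, h1, h2⟩ := hex
    have e3 : extL π ⟨j.castSucc.1 + 1, by simp only [Fin.coe_castSucc]; omega⟩
        = (π ⟨j.1 + 1, h⟩).succ := extL_mk_lt π (j.1 + 1) h (by omega)
    refine ⟨i.castSucc, j.castSucc, by simp only [Fin.coe_castSucc]; omega,
      by simpa using hij, ?_, ?_⟩
    · simpa [Fin.succ_lt_succ_iff] using h1
    · rw [e3, extL_castSucc, Fin.succ_lt_succ_iff]
      exact h2
  · intro hav hex
    apply hav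
    obtain ⟨i, j, h, hij, h1, h2⟩ := hex
    rcases Nat.lt_or_ge (j.1 + 1) m with hjm | hjm
    · have him : i.1 < m := by omega
      have hjm' : j.1 < m := by omega
      have ei : extL π i = (π ⟨i.1, him⟩).succ := by
        have e := extL_mk_lt π i.1 him i.isLt
        simpa only [Fin.eta] using e
      have ej : extL π j = (π ⟨j.1, hjm'⟩).succ := by
        have e := extL_mk_lt π j.1 hjm' j.isLt
        simpa only [Fin.eta] using e
      have e3 : extL π ⟨j.1 + 1, h⟩ = (π ⟨j.1 + 1, hjm⟩).succ := extL_mk_lt π _ hjm _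
      refine ⟨⟨i.1, him⟩, ⟨j.1, hjm'⟩, hjm, hij, ?_, ?_⟩
      · rw [ei, ej, Fin.succ_lt_succ_iff] at h1
        exact h1
      · rw [ej, e3, Fin.succ_lt_succ_iff] at h2
        exact h2
    · exfalso
      have e : (⟨j.1 + 1, h⟩ : Fin (m + 1)) = Fin.last m := Fin.ext (by simp; omega)
      rw [e, extL_last] at h2
      exact Fin.not_lt_zero _ h2

lemma av32_extL {m : ℕ} (π : Perm (Fin m)) : Avoids1d32 (extL π) ↔ Avoids1d32 π := by
  unfold Avoids1d32
  constructor
  · intro hav hex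
    apply hav
    obtain ⟨i, j, h, hij, h1, h2⟩ := hex
    have e3 : extL π ⟨j.castSucc.1 + 1, by simp only [Fin.coe_castSucc]; omega⟩
        = (π ⟨j.1 + 1, h⟩).succ := extL_mk_lt π (j.1 + 1) h (by omega)
    refine ⟨i.castSucc, j.castSucc, by simp only [Fin.coe_castSucc]; omega,
      by simpa using hij, ?_, ?_⟩
    · rw [e3, extL_castSucc, Fin.succ_lt_succ_iff]
      exact h1
    · rw [e3, extL_castSucc, Fin.succ_lt_succ_iff]
      exact h2
  · intro hav hex
    apply hav
    obtain ⟨i, j, h, hij, h1, h2⟩ := hex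
    rcases Nat.lt_or_ge (j.1 + 1) m with hjm | hjm
    · have him : i.1 < m := by omega
      have hjm' : j.1 < m := by omega
      have ei : extL π i = (π ⟨i.1, him⟩).succ := by
        have e := extL_mk_lt π i.1 him i.isLt
        simpa only [Fin.eta] using e
      have ej : extL π j = (π ⟨j.1, hjm'⟩).succ := by
        have e := extL_mk_lt π j.1 hjm' j.isLt
        simpa only [Fin.eta] using e
      have e3 : extL π ⟨j.1 + 1, h⟩ = (π ⟨j.1 + 1, hjm⟩).succ := extL_mk_lt π _ hjm _
      refine ⟨⟨i.1, him⟩, ⟨j.1, hjm'⟩, hjm, hij, ?_, ?_⟩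
      · rw [ei, e3, Fin.succ_lt_succ_iff] at h1
        exact h1
      · rw [ej, e3, Fin.succ_lt_succ_iff] at h2
        exact h2
    · exfalso
      have e : (⟨j.1 + 1, h⟩ : Fin (m + 1)) = Fin.last m := Fin.ext (by simp; omega)
      rw [e, extL_last] at h1
      exact Fin.not_lt_zero _ h1

/-- P2 -/
def equivP2 (m : ℕ) :
    {π : Perm (Fin (m + 1)) // (Avoids1d23 π ∧ Avoids1d32 π) ∧ π (Fin.last m) = 0} ≃
      {π : Perm (Fin m) // Avoids1d23 π ∧ Avoids1d32 π} where
  toFun π := ⟨delL π.1 π.2.2, by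
    have h := extL_delL π.1 π.2.2
    constructor
    · rw [← av23_extL, h]; exact π.2.1.1
    · rw [← av32_extL, h]; exact π.2.1.2⟩
  invFun π := ⟨extL π.1, ⟨(av23_extL _).mpr π.2.1, (av32_extL _).mpr π.2.2⟩, extL_last π.1⟩
  left_inv π := Subtype.ext (extL_delL π.1 π.2.2)
  right_inv π := Subtype.ext (delL_extL π.1 (extL_last π.1))
def dv (v x : ℕ) : ℕ := if x < v then x - 1 else x - 2
def uv (k y : ℕ) : ℕ := if y < k then y + 1 else y + 2

lemma uv_lt_uv {k a b : ℕ} : uv k a < uv k b ↔ a < b := by unfold uv; split_ifs <;> omega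
lemma uv_ne_zero {k y : ℕ} : uv k y ≠ 0 := by unfold uv; split_ifs <;> omega
lemma uv_ne_succ {k y : ℕ} : uv k y ≠ k + 1 := by unfold uv; split_ifs <;> omega
lemma uv_inj {k a b : ℕ} (h : uv k a = uv k b) : a = b := by
  unfold uv at h; split_ifs at h <;> omega
lemma uv_lt {k y m : ℕ} (h : y < m) : uv k y < m + 2 := by unfold uv; split_ifs <;> omega
lemma dv_lt_dv {v a b : ℕ} (ha0 : a ≠ 0) (hav : a ≠ v) (hb0 : b ≠ 0) (hbv : b ≠ v)
    (hv : v ≠ 0) : dv v a < dv v b ↔ a < b := by unfold dv; split_ifs <;> omega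
lemma dv_inj {v a b : ℕ} (ha0 : a ≠ 0) (hav : a ≠ v) (hb0 : b ≠ 0) (hbv : b ≠ v)
    (hv : v ≠ 0) (h : dv v a = dv v b) : a = b := by unfold dv at h; split_ifs at h <;> omega
lemma uv_dv {v x : ℕ} (hx0 : x ≠ 0) (hxv : x ≠ v) (hv0 : v ≠ 0) : uv (v - 1) (dv v x) = x := by
  unfold uv dv; split_ifs <;> omega
lemma dv_uv {k y : ℕ} : dv (k + 1) (uv k y) = y := by unfold dv uv; split_ifs <;> omega
lemma dv_lt_m {v x m : ℕ} (hx : x < m + 2) (hx0 : x ≠ 0) (hxv : x ≠ v) (hv : v < m + 2)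
    (hm : 0 < m) : dv v x < m := by unfold dv; split_ifs <;> omega

section P3
open Equiv
variable {m : ℕ}

lemma posvals_ne_zero (π : Perm (Fin (m + 2))) (hm : π ⟨m, by omega⟩ = 0)
    {x : Fin (m + 2)} (hx : x.1 < m) : π x ≠ 0 := by
  intro hc
  have h2 : x = ⟨m, by omega⟩ := π.injective (hc.trans hm.symm)
  have := congrArg Fin.val h2
  simp at this
  omega

lemma posvals_ne_last (π : Perm (Fin (m + 2))) {x : Fin (m + 2)} (hx : x.1 < m + 1) :
    π x ≠ π (Fin.last (m + 1)) := by
  intro hc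
  have h2 := congrArg Fin.val (π.injective hc)
  simp [Fin.last] at h2
  omega

/-- key structural lemma: if `π` avoids both patterns and does not end in the
minimum value, then the minimum value is in the second-to-last position. -/
lemma zero_at_m (π : Perm (Fin (m + 2))) (h23 : Avoids1d23 π) (h32 : Avoids1d32 π)
    (hl : π (Fin.last (m + 1)) ≠ 0) : π ⟨m, by omega⟩ = 0 := by
  have hπp : π (π⁻¹ 0) = 0 := π.apply_symm_apply 0
  set p := π⁻¹ 0 with hpdef
  have hpl : p ≠ Fin.last (m + 1) := by
    intro hc
    rw [hc] at hπp
    exact hl hπp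
  have hpv : p.1 < m + 1 := by
    have h1 := p.isLt
    have h2 : p.1 ≠ m + 1 := fun hc => hpl (Fin.ext hc)
    omega
  rcases Nat.lt_or_ge p.1 m with hlt | hge
  · exfalso
    have hb : p.1 + 1 + 1 < m + 2 := by omega
    set j : Fin (m + 2) := ⟨p.1 + 1, by omega⟩ with hj
    have hb' : j.1 + 1 < m + 2 := hb
    have hj0 : π j ≠ 0 := by
      intro hc
      have h2 := congrArg Fin.val (π.injective (hc.trans hπp.symm))
      simp [hj] at h2
    have hj20 : π ⟨j.1 + 1, hb'⟩ ≠ 0 := by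
      intro hc
      have h2 := congrArg Fin.val (π.injective (hc.trans hπp.symm))
      simp [hj] at h2
      omega
    have hpj : p < j := by
      rw [Fin.lt_def]
      simp [hj]
    have h0j : π p < π j := by
      rw [hπp]
      exact Fin.pos_iff_ne_zero.mpr hj0
    have h0j2 : π p < π ⟨j.1 + 1, hb'⟩ := by
      rw [hπp]
      exact Fin.pos_iff_ne_zero.mpr hj20
    have hne : π j ≠ π ⟨j.1 + 1, hb'⟩ := by
      intro hc
      have h2 := congrArg Fin.val (π.injective hc)
      simp [hj] at h2
    rcases lt_or_gt_of_ne hne with hcase | hcase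
    · exact h23 ⟨p, j, hb', hpj, h0j, hcase⟩
    · exact h32 ⟨p, j, hb', hpj, h0j2, hcase⟩
  · have hpm : p.1 = m := by omega
    have he : (⟨m, by omega⟩ : Fin (m + 2)) = p := Fin.ext hpm.symm
    rw [he]
    exact hπp

end P3

section P3b
open Equiv
variable {m : ℕ}

noncomputable def fwdPerm (π : Perm (Fin (m + 2))) (hm : π ⟨m, by omega⟩ = 0)
    (hl : π (Fin.last (m + 1)) ≠ 0) : Perm (Fin m) :=
  Equiv.ofBijective
    (fun i => ⟨dv (π (Fin.last (m + 1))).1 (π ⟨i.1, by omega⟩).1, by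
      refine dv_lt_m (π ⟨i.1, by omega⟩).isLt ?_ ?_ (π (Fin.last (m + 1))).isLt i.pos
      · exact fun hc => posvals_ne_zero π hm (x := ⟨i.1, by omega⟩) (by simpa using i.isLt)
          (Fin.ext hc)
      · exact fun hc => posvals_ne_last π (x := ⟨i.1, by omega⟩) (by simp)
          (Fin.ext hc)⟩)
    (Finite.injective_iff_bijective.mp (by
      intro a b hab
      have h2 := congrArg Fin.val hab
      simp only [] at h2
      have ha0 : (π ⟨a.1, by omega⟩).1 ≠ 0 := fun hc =>
        posvals_ne_zero π hm (x := ⟨a.1, by omega⟩) (by simpa using a.isLt) (Fin.ext hc)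
      have hav : (π ⟨a.1, by omega⟩).1 ≠ (π (Fin.last (m + 1))).1 := fun hc =>
        posvals_ne_last π (x := ⟨a.1, by omega⟩) (by simp) (Fin.ext hc)
      have hb0 : (π ⟨b.1, by omega⟩).1 ≠ 0 := fun hc =>
        posvals_ne_zero π hm (x := ⟨b.1, by omega⟩) (by simpa using b.isLt) (Fin.ext hc)
      have hbv : (π ⟨b.1, by omega⟩).1 ≠ (π (Fin.last (m + 1))).1 := fun hc =>
        posvals_ne_last π (x := ⟨b.1, by omega⟩) (by simp) (Fin.ext hc)
      have hv0 : (π (Fin.last (m + 1))).1 ≠ 0 := fun hc => hl (Fin.ext hc)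
      have h3 := dv_inj ha0 hav hb0 hbv hv0 h2
      have h4 := congrArg Fin.val (π.injective (Fin.ext h3 :
        π ⟨a.1, by omega⟩ = π ⟨b.1, by omega⟩))
      exact Fin.ext (by simpa using h4)))

lemma fwdPerm_apply (π : Perm (Fin (m + 2))) (hm : π ⟨m, by omega⟩ = 0)
    (hl : π (Fin.last (m + 1)) ≠ 0) (i : Fin m) :
    (fwdPerm π hm hl i).1 = dv (π (Fin.last (m + 1))).1 (π ⟨i.1, by omega⟩).1 := rfl

def bwdFun (k : Fin (m + 1)) (ρ : Perm (Fin m)) (x : Fin (m + 2)) : Fin (m + 2) :=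
  if h : x.1 < m then ⟨uv k.1 (ρ ⟨x.1, h⟩).1, uv_lt (ρ ⟨x.1, h⟩).isLt⟩
  else if x.1 = m then 0 else k.succ

lemma bwdFun_lt (k : Fin (m + 1)) (ρ : Perm (Fin m)) (x : Fin (m + 2)) (h : x.1 < m) :
    bwdFun k ρ x = ⟨uv k.1 (ρ ⟨x.1, h⟩).1, uv_lt (ρ ⟨x.1, h⟩).isLt⟩ := dif_pos h

lemma bwdFun_m (k : Fin (m + 1)) (ρ : Perm (Fin m)) (x : Fin (m + 2)) (h : x.1 = m) :
    bwdFun k ρ x = 0 := by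
  unfold bwdFun
  rw [dif_neg (by omega), if_pos h]

lemma bwdFun_last (k : Fin (m + 1)) (ρ : Perm (Fin m)) (x : Fin (m + 2)) (h : x.1 = m + 1) :
    bwdFun k ρ x = k.succ := by
  unfold bwdFun
  rw [dif_neg (by omega), if_neg (by omega)]

noncomputable def bwdPerm (k : Fin (m + 1)) (ρ : Perm (Fin m)) : Perm (Fin (m + 2)) :=
  Equiv.ofBijective (bwdFun k ρ)
    (Finite.injective_iff_bijective.mp (by
      intro a b hab
      rcases Nat.lt_or_ge a.1 m with ha | ha <;> rcases Nat.lt_or_ge b.1 m with hb | hb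
      · rw [bwdFun_lt k ρ a ha, bwdFun_lt k ρ b hb] at hab
        have h2 := congrArg Fin.val hab
        simp only [] at h2
        have h3 := uv_inj h2
        have h4 := congrArg Fin.val (ρ.injective (Fin.ext h3 : ρ ⟨a.1, ha⟩ = ρ ⟨b.1, hb⟩))
        exact Fin.ext (by simpa using h4)
      · exfalso
        rw [bwdFun_lt k ρ a ha] at hab
        rcases Nat.eq_or_lt_of_le hb with hb' | hb'
        · rw [bwdFun_m k ρ b hb'.symm] at hab
          exact uv_ne_zero (congrArg Fin.val hab)
        · rw [bwdFun_last k ρ b (by omega)] at hab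
          have := congrArg Fin.val hab
          simp [Fin.val_succ] at this
          exact uv_ne_succ this
      · exfalso
        rw [bwdFun_lt k ρ b hb] at hab
        rcases Nat.eq_or_lt_of_le ha with ha' | ha'
        · rw [bwdFun_m k ρ a ha'.symm] at hab
          exact uv_ne_zero (congrArg Fin.val hab).symm
        · rw [bwdFun_last k ρ a (by omega)] at hab
          have := congrArg Fin.val hab
          simp [Fin.val_succ] at this
          exact uv_ne_succ this.symm
      · have ha2 : a.1 = m ∨ a.1 = m + 1 := by omega
        have hb2 : b.1 = m ∨ b.1 = m + 1 := by omega
        rcases ha2 with ha2 | ha2 <;> rcases hb2 with hb2 | hb2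
        · exact Fin.ext (ha2.trans hb2.symm)
        · exfalso
          rw [bwdFun_m k ρ a ha2, bwdFun_last k ρ b hb2] at hab
          exact Fin.succ_ne_zero k hab.symm
        · exfalso
          rw [bwdFun_m k ρ b hb2, bwdFun_last k ρ a ha2] at hab
          exact Fin.succ_ne_zero k hab
        · exact Fin.ext (ha2.trans hb2.symm)))

lemma bwdPerm_lt (k : Fin (m + 1)) (ρ : Perm (Fin m)) (x : Fin (m + 2)) (h : x.1 < m) :
    bwdPerm k ρ x = ⟨uv k.1 (ρ ⟨x.1, h⟩).1, uv_lt (ρ ⟨x.1, h⟩).isLt⟩ := bwdFun_lt k ρ x h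

lemma bwdPerm_m (k : Fin (m + 1)) (ρ : Perm (Fin m)) (x : Fin (m + 2)) (h : x.1 = m) :
    bwdPerm k ρ x = 0 := bwdFun_m k ρ x h

lemma bwdPerm_last (k : Fin (m + 1)) (ρ : Perm (Fin m)) (x : Fin (m + 2)) (h : x.1 = m + 1) :
    bwdPerm k ρ x = k.succ := bwdFun_last k ρ x h

end P3b

section P3c
open Equiv
variable {m : ℕ}

lemma pv_ne0 (π : Perm (Fin (m + 2))) (hm : π ⟨m, by omega⟩ = 0) (a : Fin m) :
    (π ⟨a.1, by omega⟩).1 ≠ 0 := fun hc =>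
  posvals_ne_zero π hm (x := ⟨a.1, by omega⟩) (by simpa using a.isLt) (Fin.ext hc)

lemma pv_nev (π : Perm (Fin (m + 2))) (a : Fin m) :
    (π ⟨a.1, by omega⟩).1 ≠ (π (Fin.last (m + 1))).1 := fun hc =>
  posvals_ne_last π (x := ⟨a.1, by omega⟩) (by simp) (Fin.ext hc)

lemma fwd_lt_iff (π : Perm (Fin (m + 2))) (hm : π ⟨m, by omega⟩ = 0)
    (hl : π (Fin.last (m + 1)) ≠ 0) (a b : Fin m) :
    fwdPerm π hm hl a < fwdPerm π hm hl b ↔ π ⟨a.1, by omega⟩ < π ⟨b.1, by omega⟩ := by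
  rw [Fin.lt_def, Fin.lt_def, fwdPerm_apply, fwdPerm_apply]
  exact dv_lt_dv (pv_ne0 π hm a) (pv_nev π a) (pv_ne0 π hm b) (pv_nev π b)
    (fun hc => hl (Fin.ext hc))

lemma fwd_av23 (π : Perm (Fin (m + 2))) (hm : π ⟨m, by omega⟩ = 0)
    (hl : π (Fin.last (m + 1)) ≠ 0) (h23 : Avoids1d23 π) :
    Avoids1d23 (fwdPerm π hm hl) := by
  rintro ⟨i, j, h, hij, h1, h2⟩
  apply h23
  refine ⟨⟨i.1, by omega⟩, ⟨j.1, by omega⟩, (by omega : j.1 + 1 < m + 2),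
    hij, ?_, ?_⟩
  · exact (fwd_lt_iff π hm hl i j).mp h1
  · exact (fwd_lt_iff π hm hl j ⟨j.1 + 1, h⟩).mp h2

lemma fwd_av32 (π : Perm (Fin (m + 2))) (hm : π ⟨m, by omega⟩ = 0)
    (hl : π (Fin.last (m + 1)) ≠ 0) (h32 : Avoids1d32 π) :
    Avoids1d32 (fwdPerm π hm hl) := by
  rintro ⟨i, j, h, hij, h1, h2⟩
  apply h32
  refine ⟨⟨i.1, by omega⟩, ⟨j.1, by omega⟩, (by omega : j.1 + 1 < m + 2),
    hij, ?_, ?_⟩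
  · exact (fwd_lt_iff π hm hl i ⟨j.1 + 1, h⟩).mp h1
  · exact (fwd_lt_iff π hm hl ⟨j.1 + 1, h⟩ j).mp h2

lemma bwd_lt_iff (k : Fin (m + 1)) (ρ : Perm (Fin m)) (a b : Fin (m + 2))
    (ha : a.1 < m) (hb : b.1 < m) :
    bwdPerm k ρ a < bwdPerm k ρ b ↔ ρ ⟨a.1, ha⟩ < ρ ⟨b.1, hb⟩ := by
  rw [bwdPerm_lt k ρ a ha, bwdPerm_lt k ρ b hb, Fin.lt_def, Fin.lt_def]
  exact uv_lt_uv

lemma bwd_av23 (k : Fin (m + 1)) (ρ : Perm (Fin m)) (h23 : Avoids1d23 ρ) :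
    Avoids1d23 (bwdPerm k ρ) := by
  rintro ⟨i, j, h, hij, h1, h2⟩
  rcases Nat.lt_or_ge (j.1 + 1) m with hj | hj
  · apply h23
    refine ⟨⟨i.1, by omega⟩, ⟨j.1, by omega⟩, (by omega : j.1 + 1 < m), ?_, ?_, ?_⟩
    · exact hij
    · exact (bwd_lt_iff k ρ i j (by omega) (by omega)).mp h1
    · exact (bwd_lt_iff k ρ j ⟨j.1 + 1, h⟩ (by omega) (by show j.1 + 1 < m; omega)).mp h2
  · rcases Nat.eq_or_lt_of_le hj with hj' | hj'
    · -- third position has value 0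
      rw [bwdPerm_m k ρ ⟨j.1 + 1, h⟩ hj'.symm] at h2
      exact Fin.not_lt_zero _ h2
    · -- j has value 0
      have hjm : j.1 = m := by omega
      rw [bwdPerm_m k ρ j hjm] at h1
      exact Fin.not_lt_zero _ h1

lemma bwd_av32 (k : Fin (m + 1)) (ρ : Perm (Fin m)) (h32 : Avoids1d32 ρ) :
    Avoids1d32 (bwdPerm k ρ) := by
  rintro ⟨i, j, h, hij, h1, h2⟩
  rcases Nat.lt_or_ge (j.1 + 1) m with hj | hj
  · apply h32
    refine ⟨⟨i.1, by omega⟩, ⟨j.1, by omega⟩, (by omega : j.1 + 1 < m), ?_, ?_, ?_⟩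
    · exact hij
    · exact (bwd_lt_iff k ρ i ⟨j.1 + 1, h⟩ (by omega) (by show j.1 + 1 < m; omega)).mp h1
    · exact (bwd_lt_iff k ρ ⟨j.1 + 1, h⟩ j (by show j.1 + 1 < m; omega) (by omega)).mp h2
  · rcases Nat.eq_or_lt_of_le hj with hj' | hj'
    · rw [bwdPerm_m k ρ ⟨j.1 + 1, h⟩ hj'.symm] at h1
      exact Fin.not_lt_zero _ h1
    · have hjm : j.1 = m := by omega
      rw [bwdPerm_m k ρ j hjm] at h2
      exact Fin.not_lt_zero _ h2

lemma bwd_fwd (π : Perm (Fin (m + 2))) (hm : π ⟨m, by omega⟩ = 0)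
    (hl : π (Fin.last (m + 1)) ≠ 0) :
    bwdPerm ((π (Fin.last (m + 1))).pred hl) (fwdPerm π hm hl) = π := by
  apply Equiv.ext
  intro x
  rcases Nat.lt_or_ge x.1 m with hx | hx
  · rw [bwdPerm_lt _ _ x hx]
    apply Fin.ext
    have e1 : (fwdPerm π hm hl ⟨x.1, hx⟩).1
        = dv (π (Fin.last (m + 1))).1 (π ⟨x.1, by omega⟩).1 := fwdPerm_apply ..
    have e2 : ((π (Fin.last (m + 1))).pred hl).1 = (π (Fin.last (m + 1))).1 - 1 := rfl
    simp only [e1, e2]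
    have e3 := uv_dv (pv_ne0 π hm ⟨x.1, hx⟩) (pv_nev π ⟨x.1, hx⟩)
      (fun hc => hl (Fin.ext hc))
    simp only [] at e3
    rw [e3]
  · rcases Nat.eq_or_lt_of_le hx with hx' | hx'
    · rw [bwdPerm_m _ _ x hx'.symm]
      have : x = ⟨m, by omega⟩ := Fin.ext hx'.symm
      rw [this, hm]
    · have hxl : x = Fin.last (m + 1) := Fin.ext (by simp [Fin.last]; omega)
      rw [bwdPerm_last _ _ x (by omega), hxl, Fin.succ_pred]

lemma bwd_hm (k : Fin (m + 1)) (ρ : Perm (Fin m)) : bwdPerm k ρ ⟨m, by omega⟩ = 0 :=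
  bwdPerm_m k ρ _ rfl

lemma bwd_hl (k : Fin (m + 1)) (ρ : Perm (Fin m)) :
    bwdPerm k ρ (Fin.last (m + 1)) ≠ 0 := by
  rw [bwdPerm_last k ρ _ rfl]
  exact Fin.succ_ne_zero k

lemma fwd_bwd (k : Fin (m + 1)) (ρ : Perm (Fin m)) :
    fwdPerm (bwdPerm k ρ) (bwd_hm k ρ) (bwd_hl k ρ) = ρ := by
  apply Equiv.ext
  intro i
  apply Fin.ext
  rw [fwdPerm_apply]
  have e1 : bwdPerm k ρ (Fin.last (m + 1)) = k.succ := bwdPerm_last k ρ _ rfl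
  have e2 : bwdPerm k ρ ⟨i.1, by omega⟩ = ⟨uv k.1 (ρ ⟨i.1, i.isLt⟩).1, uv_lt (ρ ⟨i.1, i.isLt⟩).isLt⟩ := by
    rw [bwdPerm_lt k ρ _ i.isLt]
  rw [e1, e2]
  have e3 : (k.succ : Fin (m + 2)).1 = k.1 + 1 := rfl
  rw [e3]
  rw [dv_uv]

/-- P3 : avoiders not ending in the minimum -/
noncomputable def equivP3 (m : ℕ) :
    {π : Perm (Fin (m + 2)) //
        (Avoids1d23 π ∧ Avoids1d32 π) ∧ π (Fin.last (m + 1)) ≠ 0} ≃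
      Fin (m + 1) × {ρ : Perm (Fin m) // Avoids1d23 ρ ∧ Avoids1d32 ρ} where
  toFun σ :=
    ⟨(σ.1 (Fin.last (m + 1))).pred σ.2.2,
      fwdPerm σ.1 (zero_at_m σ.1 σ.2.1.1 σ.2.1.2 σ.2.2) σ.2.2,
      fwd_av23 _ _ _ σ.2.1.1, fwd_av32 _ _ _ σ.2.1.2⟩
  invFun x :=
    ⟨bwdPerm x.1 x.2.1, ⟨bwd_av23 _ _ x.2.2.1, bwd_av32 _ _ x.2.2.2⟩, bwd_hl x.1 x.2.1⟩
  left_inv σ := Subtype.ext (bwd_fwd σ.1 (zero_at_m σ.1 σ.2.1.1 σ.2.1.2 σ.2.2) σ.2.2)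
  right_inv x := by
    obtain ⟨k, ρ, hρ⟩ := x
    refine Prod.ext ?_ ?_
    · show ((bwdPerm k ρ) (Fin.last (m + 1))).pred (bwd_hl k ρ) = k
      have e1 : bwdPerm k ρ (Fin.last (m + 1)) = k.succ := bwdPerm_last k ρ _ rfl
      apply Fin.succ_injective
      rw [Fin.succ_pred, e1]
    · exact Subtype.ext (fwd_bwd k ρ)

end P3c

end AvoidSide

noncomputable def avCount (m : ℕ) : ℕ :=
  Nat.card {π : Equiv.Perm (Fin m) // Avoids1d23 π ∧ Avoids1d32 π}

open Equiv in
lemma avCount_rec (j : ℕ) : avCount (j + 2) = avCount (j + 1) + (j + 1) * avCount j := by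
  classical
  have e0 : {π : Perm (Fin (j + 2)) // Avoids1d23 π ∧ Avoids1d32 π} ≃
      {π : Perm (Fin (j + 2)) // (Avoids1d23 π ∧ Avoids1d32 π) ∧ π (Fin.last (j + 1)) = 0} ⊕
      {π : Perm (Fin (j + 2)) // (Avoids1d23 π ∧ Avoids1d32 π) ∧ π (Fin.last (j + 1)) ≠ 0} := by
    refine Equiv.trans ?_
      (Equiv.sumCongr (Equiv.subtypeSubtypeEquivSubtypeInter _ _)
        (Equiv.subtypeSubtypeEquivSubtypeInter
          (fun π : Perm (Fin (j + 2)) => Avoids1d23 π ∧ Avoids1d32 π)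
          (fun π => π (Fin.last (j + 1)) ≠ 0)))
    exact (Equiv.sumCompl fun x : {π : Perm (Fin (j + 2)) // Avoids1d23 π ∧ Avoids1d32 π} =>
      x.1 (Fin.last (j + 1)) = 0).symm
  rw [avCount, Nat.card_congr e0, Nat.card_sum]
  congr 1
  · rw [Nat.card_congr (equivP2 (j + 1)), avCount]
  · rw [Nat.card_congr (equivP3 j), Nat.card_prod, Nat.card_eq_fintype_card,
      Fintype.card_fin, avCount]

lemma avoids_of_le_one {m : ℕ} (hm : m ≤ 1) (π : Equiv.Perm (Fin m)) :
    Avoids1d23 π ∧ Avoids1d32 π := by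
  constructor <;> rintro ⟨i, j, h, -⟩ <;> omega

lemma perm_eq_of_le_one {m : ℕ} (hm : m ≤ 1) (σ τ : Equiv.Perm (Fin m)) : σ = τ := by
  apply Equiv.ext
  intro x
  interval_cases m
  · exact absurd x.isLt (by omega)
  · have h1 := (σ x).isLt
    have h2 := (τ x).isLt
    apply Fin.ext
    omega

lemma avCount_small {m : ℕ} (hm : m ≤ 1) : avCount m = 1 := by
  rw [avCount]
  have : Unique {π : Equiv.Perm (Fin m) // Avoids1d23 π ∧ Avoids1d32 π} :=
    { default := ⟨1, avoids_of_le_one hm 1⟩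
      uniq := fun σ => Subtype.ext (perm_eq_of_le_one hm σ.1 1) }
  exact Nat.card_unique

lemma invCount_small {m : ℕ} (hm : m ≤ 1) : invCount m = 1 := by
  rw [invCount]
  have : Unique {σ : Equiv.Perm (Fin m) // σ * σ = 1} :=
    { default := ⟨1, mul_one 1⟩
      uniq := fun σ => Subtype.ext (perm_eq_of_le_one hm σ.1 1) }
  exact Nat.card_unique

lemma avCount_eq_invCount : ∀ m, avCount m = invCount m := by
  intro m
  induction m using Nat.strong_induction_on with
  | _ m ih =>
    match m with
    | 0 => rw [avCount_small (by omega), invCount_small (by omega)]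
    | 1 => rw [avCount_small (by omega), invCount_small (by omega)]
    | (j + 2) =>
      rw [avCount_rec, invCount_rec, ih (j + 1) (by omega), ih j (by omega)]

theorem count_not_ending_one (n : ℕ) (hn : 2 ≤ n) :
    Nat.card {π : Equiv.Perm (Fin n) // Avoids1d23 π ∧ Avoids1d32 π ∧
      π ⟨n - 1, by omega⟩ ≠ ⟨0, by omega⟩} = (n - 1) * invCount (n - 2) := by
  obtain ⟨m, rfl⟩ : ∃ m, n = m + 2 := ⟨n - 2, by omega⟩
  change _ = (m + 1) * invCount m
  have he : ∀ π : Equiv.Perm (Fin (m + 2)),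
      (Avoids1d23 π ∧ Avoids1d32 π ∧ π ⟨m + 2 - 1, by omega⟩ ≠ ⟨0, by omega⟩) ↔
      ((Avoids1d23 π ∧ Avoids1d32 π) ∧ π (Fin.last (m + 1)) ≠ 0) := by
    intro π
    have e1 : (⟨m + 2 - 1, by omega⟩ : Fin (m + 2)) = Fin.last (m + 1) := rfl
    have e2 : (⟨0, by omega⟩ : Fin (m + 2)) = 0 := rfl
    rw [e1, e2, and_assoc]
  rw [Nat.card_congr (Equiv.subtypeEquivRight he), Nat.card_congr (equivP3 m),
    Nat.card_prod, Nat.card_eq_fintype_card, Fintype.card_fin]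
  have := avCount_eq_invCount m
  rw [avCount] at this
  rw [this]
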